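/- Let r > t ≥ 1. Let G be a graph and T a (t+1)-subset of V(G) inducing a clique. Let N be the set of common neighbors of all vertices of T. If the family of vertex sets of r-cliques of G is t-intersecting (any two distinct r-cliques share at least t vertices), then the family of vertex sets of (r-t)-cliques of the induced subgraph G[N] is 1-intersecting (any two distinct (r-t)-cliques of G[N] share at least one vertex). -/

import Mathlib

open Finset SimpleGraph

/-- If the `r`-cliques of `G` are `t`-intersecting and `T` is a `(t+1)`-clique with common
neighborhood `N`, then the `(r-t)`-cliques of the induced subgraph `G[N]` are
`1`-intersecting. -/
theorem induced_one_intersecting {V : Type*} [DecidableEq V] (G : SimpleGraph V)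
    (r t : ℕ) (ht : 1 ≤ t) (htr : t < r)
    (T : Finset V) (hT : G.IsNClique (t + 1) T)
    (hinter : ∀ A B : Finset V, G.IsNClique r A → G.IsNClique r B → A ≠ B →
      t ≤ (A ∩ B).card)
    (N : Set V) (hN : N = {v : V | ∀ u ∈ T, G.Adj u v}) :
    ∀ A B : Finset V, ↑A ⊆ N → ↑B ⊆ N →
      G.IsNClique (r - t) A → G.IsNClique (r - t) B → A ≠ B →
        1 ≤ (A ∩ B).card := by
  intro A B hAN hBN hA hB hAB
  -- membership in N gives adjacency to all of T
  have hadj : ∀ v ∈ A ∪ B, ∀ u ∈ T, G.Adj u v := by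
    intro v hv u hu
    rcases Finset.mem_union.1 hv with h | h
    · have := hAN h; rw [hN] at this; exact this u hu
    · have := hBN h; rw [hN] at this; exact this u hu
  -- A and B are disjoint from T
  have hdisj : ∀ v ∈ A ∪ B, v ∉ T := by
    intro v hv hvT
    exact G.loopless.irrefl v (hadj v hv v hvT)
  -- pick two distinct elements x y of T
  have hT2 : 2 ≤ T.card := by rw [hT.card_eq]; omega
  obtain ⟨x, hx, y, hy, hxy⟩ := Finset.one_lt_card.1 hT2
  -- build the big cliques
  have hbig : ∀ C : Finset V, C ⊆ A ∪ B → G.IsNClique (r - t) C → ∀ z ∈ T,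
      G.IsNClique r (C ∪ T.erase z) := by
    intro C hC hCcl z hz
    constructor
    · intro a ha b hb hab
      simp only [Finset.coe_union, Set.mem_union, Finset.mem_coe] at ha hb
      rcases ha with ha | ha <;> rcases hb with hb | hb
      · exact hCcl.1 ha hb hab
      · exact (hadj a (hC ha) b (Finset.mem_of_mem_erase hb)).symm
      · exact hadj b (hC hb) a (Finset.mem_of_mem_erase ha)
      · exact hT.1 (Finset.mem_of_mem_erase ha) (Finset.mem_of_mem_erase hb) hab
    · have hd : Disjoint C (T.erase z) := by
        rw [Finset.disjoint_left]
        intro a ha haz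
        exact hdisj a (hC ha) (Finset.mem_of_mem_erase haz)
      rw [Finset.card_union_of_disjoint hd, hCcl.card_eq,
        Finset.card_erase_of_mem hz, hT.card_eq]
      omega
  have hA' := hbig A Finset.subset_union_left hA x hx
  have hB' := hbig B Finset.subset_union_right hB y hy
  -- the two big cliques are distinct: x belongs to the second but not the first
  have hne : A ∪ T.erase x ≠ B ∪ T.erase y := by
    intro h
    have hxmem : x ∈ B ∪ T.erase y := by
      exact Finset.mem_union_right _ (Finset.mem_erase.2 ⟨hxy, hx⟩)
    rw [← h] at hxmem
    rcases Finset.mem_union.1 hxmem with h1 | h1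
    · exact hdisj x (Finset.mem_union_left _ h1) hx
    · exact (Finset.mem_erase.1 h1).1 rfl
  have hkey := hinter _ _ hA' hB' hne
  -- bound the intersection
  have hsub : (A ∪ T.erase x) ∩ (B ∪ T.erase y) ⊆ (A ∩ B) ∪ (T.erase x ∩ T.erase y) := by
    intro v hv
    obtain ⟨h1, h2⟩ := Finset.mem_inter.1 hv
    rcases Finset.mem_union.1 h1 with h1 | h1 <;> rcases Finset.mem_union.1 h2 with h2 | h2
    · exact Finset.mem_union_left _ (Finset.mem_inter.2 ⟨h1, h2⟩)
    · exact absurd (Finset.mem_of_mem_erase h2) (hdisj v (Finset.mem_union_left _ h1))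
    · exact absurd (Finset.mem_of_mem_erase h1) (hdisj v (Finset.mem_union_right _ h2))
    · exact Finset.mem_union_right _ (Finset.mem_inter.2 ⟨h1, h2⟩)
  have hcard1 : (T.erase x ∩ T.erase y).card ≤ t - 1 := by
    have : T.erase x ∩ T.erase y ⊆ (T.erase x).erase y := by
      intro v hv
      obtain ⟨h1, h2⟩ := Finset.mem_inter.1 hv
      exact Finset.mem_erase.2 ⟨(Finset.mem_erase.1 h2).1, h1⟩
    calc (T.erase x ∩ T.erase y).card ≤ ((T.erase x).erase y).card := Finset.card_le_card this
      _ ≤ T.card - 2 := by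
          rw [Finset.card_erase_of_mem (Finset.mem_erase.2 ⟨fun h => hxy h.symm, hy⟩),
            Finset.card_erase_of_mem hx]
          omega
      _ = t - 1 := by rw [hT.card_eq]; omega
  have := Finset.card_le_card hsub
  have := Finset.card_union_le (A ∩ B) (T.erase x ∩ T.erase y)
  omega
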